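/- Let 0 < α < n, 1 < p ≤ q < ∞, and let (u, σ) be a pair of weights. The following are equivalent: (1) (u, σ) ∈ A_{p,q}^α; (2) there is a constant C such that for every f ∈ L^p(σ), sup_{t>0} t · u({x ∈ ℝ^n : M_α(fσ)(x) > t})^{1/q} ≤ C (∫_{ℝ^n} |f|^p σ dx)^{1/p}. Moreover, when (1) holds the constant in (2) may be taken to be C(n,α) [u,σ]_{A_{p,q}^α}. -/

import Mathlib

open MeasureTheory ENNReal Set Filter
open scoped NNReal

noncomputable section

abbrev Eucl (n : ℕ) := EuclideanSpace ℝ (Fin n)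

/-- The half-open cube in `ℝⁿ` with corner `a` and side length `h`. -/
def cube (n : ℕ) (a : Fin n → ℝ) (h : ℝ) : Set (Eucl n) :=
  {x | ∀ i, a i ≤ x i ∧ x i < a i + h}

/-- Average of an `ℝ≥0∞`-valued function over a set (w.r.t. Lebesgue measure). -/
def lavg {n : ℕ} (Q : Set (Eucl n)) (g : Eucl n → ℝ≥0∞) : ℝ≥0∞ :=
  (∫⁻ x in Q, g x) / volume Q

/-- `u(E) = ∫_E u dx` for a weight `u`. -/
def setW {n : ℕ} (u : Eucl n → ℝ) (s : Set (Eucl n)) : ℝ≥0∞ :=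
  ∫⁻ x in s, ENNReal.ofReal (u x)

/-- A weight: nonnegative, measurable, positive on a set of positive measure. -/
def Weight {n : ℕ} (u : Eucl n → ℝ) : Prop :=
  Measurable u ∧ (∀ x, 0 ≤ u x) ∧ 0 < volume {x | 0 < u x}

/-- The fractional maximal operator `M_α`. -/
def maxFn (n : ℕ) (α : ℝ) (f : Eucl n → ℝ) (x : Eucl n) : ℝ≥0∞ :=
  ⨆ (a : Fin n → ℝ) (h : ℝ) (_ : 0 < h) (_ : x ∈ cube n a h),
    volume (cube n a h) ^ (α / (n:ℝ)) * lavg (cube n a h) (fun y => ENNReal.ofReal |f y|)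

/-- The fractional maximal operator restricted to a family of cubes. -/
def maxFnGrid (n : ℕ) (α : ℝ) (D : Set (Set (Eucl n))) (f : Eucl n → ℝ) (x : Eucl n) : ℝ≥0∞ :=
  ⨆ (Q : Set (Eucl n)) (_ : Q ∈ D) (_ : x ∈ Q),
    volume Q ^ (α / (n:ℝ)) * lavg Q (fun y => ENNReal.ofReal |f y|)

/-- The fractional integral `I_α`, as a positive (`ℝ≥0∞`-valued) operator. -/
def fracIntE (n : ℕ) (α : ℝ) (f : Eucl n → ℝ) (x : Eucl n) : ℝ≥0∞ :=
  ∫⁻ y, ENNReal.ofReal (f y) * ENNReal.ofReal (‖x - y‖ ^ (α - (n:ℝ)))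

/-- The dyadic fractional integral associated to a family of cubes. -/
def fracIntGrid (n : ℕ) (α : ℝ) (D : Set (Set (Eucl n))) (f : Eucl n → ℝ) (x : Eucl n) : ℝ≥0∞ :=
  ∑' Q : D, Set.indicator (Q : Set (Eucl n))
    (fun _ => volume (Q : Set (Eucl n)) ^ (α / (n:ℝ)) *
      lavg (Q : Set (Eucl n)) (fun y => ENNReal.ofReal (f y))) x

/-- The standard dyadic grid `Δ`. -/
def stdGrid (n : ℕ) : Set (Set (Eucl n)) :=
  {Q | ∃ (k : ℤ) (m : Fin n → ℤ), Q = cube n (fun i => (2:ℝ) ^ k * (m i : ℝ)) ((2:ℝ) ^ k)}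

/-- The translated dyadic grids `𝒟^t`. -/
def transGrid (n : ℕ) (t : Fin n → ℝ) : Set (Set (Eucl n)) :=
  {Q | ∃ (j : ℤ) (m : Fin n → ℤ), Q = cube n (fun i => (2:ℝ) ^ j * ((m i : ℝ) + t i)) ((2:ℝ) ^ j)}

def thirds : Set ℝ := {0, 1/3, -1/3}

/-- A collection of cubes is a dyadic grid. -/
def IsDyadicGrid (n : ℕ) (D : Set (Set (Eucl n))) : Prop :=
  (∀ Q ∈ D, ∃ (a : Fin n → ℝ) (k : ℤ), Q = cube n a ((2:ℝ) ^ k)) ∧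
  (∀ P ∈ D, ∀ Q ∈ D, P ∩ Q = P ∨ P ∩ Q = Q ∨ P ∩ Q = ∅) ∧
  (∀ (k : ℤ) (x : Eucl n), ∃! Q, Q ∈ D ∧ (∃ a, Q = cube n a ((2:ℝ) ^ k)) ∧ x ∈ Q)

/-- The set `E(Q) = Q \ ⋃ {P ∈ S : P ⊊ Q}`. -/
def sparseE {n : ℕ} (S : Set (Set (Eucl n))) (Q : Set (Eucl n)) : Set (Eucl n) :=
  Q \ ⋃ P ∈ {P | P ∈ S ∧ P ⊂ Q}, P

/-- A sparse family of cubes. -/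
def IsSparse {n : ℕ} (S : Set (Set (Eucl n))) : Prop :=
  ∀ Q ∈ S, volume Q ≤ 2 * volume (sparseE S Q)

/-- The sparse linearized maximal operator `L_α^S`. -/
def sparseL (n : ℕ) (α : ℝ) (S : Set (Set (Eucl n))) (f : Eucl n → ℝ) (x : Eucl n) : ℝ≥0∞ :=
  ∑' Q : S, Set.indicator (sparseE S (Q : Set (Eucl n)))
    (fun _ => volume (Q : Set (Eucl n)) ^ (α / (n:ℝ)) *
      lavg (Q : Set (Eucl n)) (fun y => ENNReal.ofReal (f y))) x

/-- The Calderón–Zygmund cubes: the maximal cubes `Q ∈ Δ` with `⟨|f|⟩_Q > λ`. -/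
def czCubes (n : ℕ) (f : Eucl n → ℝ) (lam : ℝ) : Set (Set (Eucl n)) :=
  {Q | Q ∈ stdGrid n ∧ ENNReal.ofReal lam < lavg Q (fun y => ENNReal.ofReal |f y|) ∧
    ∀ P ∈ stdGrid n, Q ⊆ P →
      ENNReal.ofReal lam < lavg P (fun y => ENNReal.ofReal |f y|) → P = Q}

/-- The one-weight `A_{p,q}` constant, `1 < p`. -/
def apqConst (n : ℕ) (p q : ℝ) (w : Eucl n → ℝ) : ℝ≥0∞ :=
  ⨆ (a : Fin n → ℝ) (h : ℝ) (_ : 0 < h),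
    (lavg (cube n a h) (fun x => ENNReal.ofReal (w x ^ q))) ^ (1/q) *
    (lavg (cube n a h) (fun x => ENNReal.ofReal (w x ^ (-(p/(p-1)))))) ^ (1 - 1/p)

/-- The one-weight `A_{1,q}` constant. -/
def a1qConst (n : ℕ) (q : ℝ) (w : Eucl n → ℝ) : ℝ≥0∞ :=
  ⨆ (a : Fin n → ℝ) (h : ℝ) (_ : 0 < h),
    (lavg (cube n a h) (fun x => ENNReal.ofReal (w x ^ q))) ^ (1/q) *
    essSup (fun x => ENNReal.ofReal (w x)⁻¹) (volume.restrict (cube n a h))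

/-- The two-weight `A_{p,q}^α` constant. -/
def apqAlpha (n : ℕ) (α p q : ℝ) (u σ : Eucl n → ℝ) : ℝ≥0∞ :=
  ⨆ (a : Fin n → ℝ) (h : ℝ) (_ : 0 < h),
    volume (cube n a h) ^ (α / (n:ℝ) + 1/q - 1/p) *
    ((lavg (cube n a h) (fun x => ENNReal.ofReal (u x))) ^ (1/q) *
     (lavg (cube n a h) (fun x => ENNReal.ofReal (σ x))) ^ (1 - 1/p))

/-- Sawyer testing constant for the fractional maximal operator. -/
def maxTestConst (n : ℕ) (α p q : ℝ) (u σ : Eucl n → ℝ) : ℝ≥0∞ :=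
  ⨆ (a : Fin n → ℝ) (h : ℝ) (_ : 0 < h) (_ : 0 < setW σ (cube n a h)),
    setW σ (cube n a h) ^ (-(1/p)) *
    (∫⁻ x in cube n a h,
      (maxFn n α ((cube n a h).indicator σ) x) ^ q * ENNReal.ofReal (u x)) ^ (1/q)

/-- Sawyer testing constant for the fractional integral operator. -/
def fracTestConst (n : ℕ) (α p q : ℝ) (u σ : Eucl n → ℝ) : ℝ≥0∞ :=
  ⨆ (a : Fin n → ℝ) (h : ℝ) (_ : 0 < h) (_ : 0 < setW σ (cube n a h)),
    setW σ (cube n a h) ^ (-(1/p)) *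
    (∫⁻ x in cube n a h,
      (fracIntE n α ((cube n a h).indicator σ) x) ^ q * ENNReal.ofReal (u x)) ^ (1/q)

/-- The BMO seminorm. -/
def bmoNorm (n : ℕ) (b : Eucl n → ℝ) : ℝ≥0∞ :=
  ⨆ (a : Fin n → ℝ) (h : ℝ) (_ : 0 < h),
    lavg (cube n a h) (fun x => ENNReal.ofReal |b x - ⨍ y in cube n a h, b y|)

/-- The commutator `[b, I_α] f`. -/
def commFrac (n : ℕ) (α : ℝ) (b f : Eucl n → ℝ) (x : Eucl n) : ℝ :=
  ∫ y, (b x - b y) * f y * ‖x - y‖ ^ (α - (n:ℝ))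

/-- The dyadic commutator-type operator `C_b^D`. -/
def commGrid (n : ℕ) (α : ℝ) (D : Set (Set (Eucl n))) (b f : Eucl n → ℝ) (x : Eucl n) : ℝ≥0∞ :=
  ∑' Q : D, Set.indicator (Q : Set (Eucl n))
    (fun _ => volume (Q : Set (Eucl n)) ^ (α / (n:ℝ)) *
      lavg (Q : Set (Eucl n)) (fun y => ENNReal.ofReal (|b x - b y| * f y))) x

/-- Young functions. -/
def IsYoung (B : ℝ → ℝ) : Prop :=
  ContinuousOn B (Ici 0) ∧ ConvexOn ℝ (Ici 0) B ∧ StrictMonoOn B (Ici 0) ∧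
  B 0 = 0 ∧ Tendsto (fun t => B t / t) atTop atTop

/-- The associate Young function `B̄(t) = sup_{s>0} (st − B(s))`. -/
def youngConj (B : ℝ → ℝ) (t : ℝ) : ℝ :=
  sSup ((fun s => s * t - B s) '' Ioi 0)

/-- The `B_p` condition: `∫_1^∞ B(t)/t^p dt/t < ∞`. -/
def IsBp (B : ℝ → ℝ) (p : ℝ) : Prop :=
  IntegrableOn (fun t => B t / t ^ (p + 1)) (Ioi 1)

/-- The normalized Luxemburg norm of `f` on the cube `Q`. -/
def luxNorm {n : ℕ} (B : ℝ → ℝ) (Q : Set (Eucl n)) (f : Eucl n → ℝ) : ℝ :=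
  sInf {lam : ℝ | 0 < lam ∧ (⨍ x in Q, B (|f x| / lam)) ≤ 1}

/-- The separated bump constant `[u,σ]_{A_{p,q,B}^α}` (bump on the right). -/
def bumpRight (n : ℕ) (α p q : ℝ) (B : ℝ → ℝ) (u σ : Eucl n → ℝ) : ℝ≥0∞ :=
  ⨆ (a : Fin n → ℝ) (h : ℝ) (_ : 0 < h),
    volume (cube n a h) ^ (α / (n:ℝ) + 1/q - 1/p) *
    ((lavg (cube n a h) (fun x => ENNReal.ofReal (u x))) ^ (1/q) *
     ENNReal.ofReal (luxNorm B (cube n a h) (fun x => σ x ^ ((p-1)/p))))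

/-- The conjoined bump constant `[u,σ]_{A_{p,q,A,B}^α}`. -/
def bumpBoth (n : ℕ) (α p q : ℝ) (A B : ℝ → ℝ) (u σ : Eucl n → ℝ) : ℝ≥0∞ :=
  ⨆ (a : Fin n → ℝ) (h : ℝ) (_ : 0 < h),
    volume (cube n a h) ^ (α / (n:ℝ) + 1/q - 1/p) *
    (ENNReal.ofReal (luxNorm A (cube n a h) (fun x => u x ^ (1/q))) *
     ENNReal.ofReal (luxNorm B (cube n a h) (fun x => σ x ^ ((p-1)/p))))

/-- Strong operator norm of `I_α(·σ) : L^p(σ) → L^q(u)`. -/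
def strongNormI (n : ℕ) (α p q : ℝ) (u σ : Eucl n → ℝ) : ℝ≥0∞ :=
  ⨆ (f : Eucl n → ℝ) (_ : Measurable f)
    (_ : (∫⁻ x, ENNReal.ofReal |f x| ^ p * ENNReal.ofReal (σ x)) ≤ 1),
    (∫⁻ x, (fracIntE n α (fun y => |f y| * σ y) x) ^ q * ENNReal.ofReal (u x)) ^ (1/q)

/-- Weak operator norm of `I_α(·σ) : L^p(σ) → L^{q,∞}(u)`. -/
def weakNormI (n : ℕ) (α p q : ℝ) (u σ : Eucl n → ℝ) : ℝ≥0∞ :=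
  ⨆ (f : Eucl n → ℝ) (_ : Measurable f)
    (_ : (∫⁻ x, ENNReal.ofReal |f x| ^ p * ENNReal.ofReal (σ x)) ≤ 1)
    (t : ℝ) (_ : 0 < t),
    ENNReal.ofReal t *
      (setW u {x | ENNReal.ofReal t < fracIntE n α (fun y => |f y| * σ y) x}) ^ (1/q)

end
section Auxiliary

lemma ennreal_mul_le_of_forall_lt {m X Y : ℝ≥0∞} (hm : m ≠ ⊤)
    (H : ∀ t : ℝ, 0 < t → ENNReal.ofReal t < m → ENNReal.ofReal t * X ≤ Y) : m * X ≤ Y := by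
  have key : ∀ c : ℝ≥0∞, c < m → c * X ≤ Y := by
    intro c hc
    rcases eq_or_ne c 0 with rfl | hc0
    · simp
    · have hct : c ≠ ⊤ := (hc.trans_le le_top).ne
      have h1 : (0:ℝ) < c.toReal := ENNReal.toReal_pos hc0 hct
      have h2 : ENNReal.ofReal c.toReal = c := ENNReal.ofReal_toReal hct
      have := H c.toReal h1 (by rw [h2]; exact hc)
      rwa [h2] at this
  rcases eq_or_ne X 0 with rfl | hX0
  · simp
  rcases eq_or_ne X ⊤ with rfl | hXt
  · rcases eq_or_ne m 0 with rfl | hm0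
    · simp
    · obtain ⟨c, hc0, hcm⟩ := exists_between (pos_iff_ne_zero.mpr hm0)
      have := key c hcm
      rwa [ENNReal.mul_top hm0, ← ENNReal.mul_top (ne_of_gt hc0)]
  · rw [← ENNReal.le_div_iff_mul_le (Or.inl hX0) (Or.inl hXt)]
    refine le_of_forall_lt_imp_le_of_dense fun c hc => ?_
    rw [ENNReal.le_div_iff_mul_le (Or.inl hX0) (Or.inl hXt)]
    exact key c hc

lemma rpow_split (x : ℝ≥0∞) {r : ℝ} (hr : 1 ≤ r) (h0 : x ≠ 0) (ht : x ≠ ⊤) :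
    x ^ r = x * x ^ (r - 1) := by
  have e1 : x ^ ((1:ℝ) + (r-1)) = x ^ (1:ℝ) * x ^ (r-1) := ENNReal.rpow_add _ _ h0 ht
  have e2 : (1:ℝ) + (r-1) = r := by ring
  rw [e2, ENNReal.rpow_one] at e1
  exact e1

lemma tsum_rpow_le_rpow_tsum {ι : Type*} [Countable ι] (g : ι → ℝ≥0∞) {r : ℝ} (hr : 1 ≤ r) :
    ∑' i, g i ^ r ≤ (∑' i, g i) ^ r := by
  have hr0 : (0:ℝ) < r := lt_of_lt_of_le one_pos hr
  set S := ∑' i, g i with hS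
  rcases eq_or_ne S 0 with h0 | h0
  · have : ∀ i, g i = 0 := fun i => le_antisymm (h0 ▸ ENNReal.le_tsum i) zero_le
    simp [this, ENNReal.zero_rpow_of_pos hr0]
  rcases eq_or_ne S ⊤ with ht | ht
  · rw [ht, ENNReal.top_rpow_of_pos hr0]; exact le_top
  calc ∑' i, g i ^ r ≤ ∑' i, g i * S ^ (r - 1) := by
        refine ENNReal.tsum_le_tsum fun i => ?_
        rcases eq_or_ne (g i) 0 with h | h
        · simp [h, ENNReal.zero_rpow_of_pos hr0]
        · have hgt : g i ≠ ⊤ := fun hc => ht (top_le_iff.mp (hc ▸ ENNReal.le_tsum i))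
          rw [rpow_split (g i) hr h hgt]
          exact mul_le_mul_right (ENNReal.rpow_le_rpow (ENNReal.le_tsum i) (by linarith)) _
    _ = S * S ^ (r - 1) := by rw [ENNReal.tsum_mul_right]
    _ = S ^ r := (rpow_split S hr h0 ht).symm
lemma cube_eq_preimage (n : ℕ) (a : Fin n → ℝ) (h : ℝ) :
    cube n a h = (MeasurableEquiv.toLp 2 (Fin n → ℝ)).symm ⁻¹'
      (Set.univ.pi fun i => Set.Ico (a i) (a i + h)) := by
  ext x
  simp [cube, Set.mem_pi, MeasurableEquiv.coe_toLp_symm]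

lemma measurableSet_cube {n : ℕ} {a : Fin n → ℝ} {h : ℝ} : MeasurableSet (cube n a h) := by
  rw [cube_eq_preimage]
  exact (MeasurableEquiv.measurable _) (MeasurableSet.univ_pi fun i => measurableSet_Ico)

lemma volume_cube (n : ℕ) (a : Fin n → ℝ) (h : ℝ) :
    volume (cube n a h) = ENNReal.ofReal h ^ n := by
  rw [cube_eq_preimage,
    (EuclideanSpace.volume_preserving_symm_measurableEquiv_toLp (Fin n)).measure_preimage
      ((MeasurableSet.univ_pi fun i => measurableSet_Ico)).nullMeasurableSet,
    volume_pi_pi]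
  simp [Real.volume_Ico]

lemma volume_cube_ne_zero {n : ℕ} (a : Fin n → ℝ) {h : ℝ} (hh : 0 < h) :
    volume (cube n a h) ≠ 0 := by
  rw [volume_cube]
  exact pow_ne_zero _ (by simpa using hh)

lemma volume_cube_ne_top {n : ℕ} (a : Fin n → ℝ) (h : ℝ) :
    volume (cube n a h) ≠ ⊤ := by
  rw [volume_cube]
  exact ENNReal.pow_ne_top ENNReal.ofReal_ne_top

/-- The key rearrangement: `u(Q)^{1/q} σ(Q)^{1-1/p} ≤ A · |Q|^{1-α/n}`. -/
lemma apq_term_bound {n : ℕ} {α p q : ℝ} (hp : 1 < p) (hq : 0 < q) (u σ : Eucl n → ℝ)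
    (a : Fin n → ℝ) {h : ℝ} (hh : 0 < h) :
    setW u (cube n a h) ^ (1/q) * setW σ (cube n a h) ^ (1 - 1/p) ≤
      apqAlpha n α p q u σ * volume (cube n a h) ^ (1 - α/(n:ℝ)) := by
  set v := volume (cube n a h) with hv
  have hv0 : v ≠ 0 := volume_cube_ne_zero a hh
  have hvt : v ≠ ⊤ := volume_cube_ne_top a h
  set U := setW u (cube n a h) with hU
  set S := setW σ (cube n a h) with hS
  have hterm : v ^ (α/(n:ℝ) + 1/q - 1/p) * ((U / v) ^ (1/q) * (S / v) ^ (1 - 1/p)) ≤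
      apqAlpha n α p q u σ := by
    refine le_iSup_of_le a (le_iSup_of_le h (le_iSup_of_le hh ?_))
    exact le_refl _
  have hmul := mul_le_mul_left hterm (v ^ (1 - α/(n:ℝ)))
  refine le_trans (le_of_eq ?_) hmul
  have hvadd : ∀ x y : ℝ, v ^ x * v ^ y = v ^ (x + y) :=
    fun x y => (ENNReal.rpow_add x y hv0 hvt).symm
  have h1q : (0:ℝ) ≤ 1/q := by positivity
  have h1p : (0:ℝ) ≤ 1 - 1/p := by
    have : 1/p < 1 := by rw [div_lt_one (lt_trans one_pos hp)]; exact hp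
    linarith
  have hdivU : (U / v) ^ (1/q) = U ^ (1/q) * v ^ (-(1/q)) := by
    rw [ENNReal.div_rpow_of_nonneg _ _ h1q, ENNReal.rpow_neg, div_eq_mul_inv]
  have hdivS : (S / v) ^ (1 - 1/p) = S ^ (1 - 1/p) * v ^ (-(1 - 1/p)) := by
    rw [ENNReal.div_rpow_of_nonneg _ _ h1p, ENNReal.rpow_neg, div_eq_mul_inv]
  rw [hdivU, hdivS]
  calc U ^ (1/q) * S ^ (1 - 1/p)
      = (U ^ (1/q) * S ^ (1 - 1/p)) *
        ((v ^ (α/(n:ℝ) + 1/q - 1/p) * v ^ (-(1/q))) * (v ^ (-(1 - 1/p)) * v ^ (1 - α/(n:ℝ)))) := by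
        rw [hvadd, hvadd, hvadd]
        have he : (α/(n:ℝ) + 1/q - 1/p) + (-(1/q)) + ((-(1 - 1/p)) + (1 - α/(n:ℝ))) = 0 := by ring
        rw [he, ENNReal.rpow_zero, mul_one]
    _ = v ^ (α/(n:ℝ) + 1/q - 1/p) * (U ^ (1/q) * v ^ (-(1/q)) * (S ^ (1 - 1/p) * v ^ (-(1 - 1/p)))) *
        v ^ (1 - α/(n:ℝ)) := by ring
lemma holder_set {n : ℕ} {f σ : Eucl n → ℝ} (hf : Measurable f) (hσ : Measurable σ)
    (hσ0 : ∀ x, 0 ≤ σ x) {p : ℝ} (hp : 1 < p) (s : Set (Eucl n)) :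
    (∫⁻ y in s, ENNReal.ofReal |f y * σ y|) ≤
      (∫⁻ y in s, ENNReal.ofReal |f y| ^ p * ENNReal.ofReal (σ y)) ^ (1/p) *
      (∫⁻ y in s, ENNReal.ofReal (σ y)) ^ (1 - 1/p) := by
  have hpq : p.HolderConjugate (p.conjExponent) := Real.HolderConjugate.conjExponent hp
  set p' := p.conjExponent with hp'
  have h1p' : 1 - 1/p = 1/p' := by
    rw [one_div, one_div, hpq.one_sub_inv]
  set F : Eucl n → ℝ≥0∞ := fun y => ENNReal.ofReal |f y| * ENNReal.ofReal (σ y) ^ (1/p) with hF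
  set G : Eucl n → ℝ≥0∞ := fun y => ENNReal.ofReal (σ y) ^ (1/p') with hG
  have hFm : AEMeasurable F (volume.restrict s) := by
    exact ((hf.abs.ennreal_ofReal).mul ((hσ.ennreal_ofReal).pow_const _)).aemeasurable
  have hGm : AEMeasurable G (volume.restrict s) := by
    exact ((hσ.ennreal_ofReal).pow_const _).aemeasurable
  have key := ENNReal.lintegral_mul_le_Lp_mul_Lq (volume.restrict s) hpq hFm hGm
  have hppos : (0:ℝ) < p := lt_trans one_pos hp
  have hp'pos : (0:ℝ) < p' := hpq.symm.pos
  have e1 : ∀ y, (F * G) y = ENNReal.ofReal |f y * σ y| := by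
    intro y
    simp only [Pi.mul_apply, hF, hG]
    rcases eq_or_lt_of_le (hσ0 y) with h | h
    · rw [abs_mul, ← h, abs_zero, mul_zero, ENNReal.ofReal_zero,
        ENNReal.zero_rpow_of_pos (one_div_pos.mpr hppos),
        ENNReal.zero_rpow_of_pos (one_div_pos.mpr hp'pos)]
      simp
    · have hne : ENNReal.ofReal (σ y) ≠ 0 := by simpa using h
      have hadd : 1/p + 1/p' = 1 := by
        rw [one_div, one_div]; exact hpq.inv_add_inv_eq_one
      rw [mul_assoc, ← ENNReal.rpow_add _ _ hne ENNReal.ofReal_ne_top, hadd,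
        ENNReal.rpow_one, ← ENNReal.ofReal_mul (abs_nonneg _), abs_mul,
        abs_of_nonneg (hσ0 y)]
  have e2 : ∀ y, F y ^ p = ENNReal.ofReal |f y| ^ p * ENNReal.ofReal (σ y) := by
    intro y
    simp only [hF]
    rw [ENNReal.mul_rpow_of_nonneg _ _ (le_of_lt hppos), ← ENNReal.rpow_mul,
      one_div, inv_mul_cancel₀ (ne_of_gt hppos), ENNReal.rpow_one]
  have e3 : ∀ y, G y ^ p' = ENNReal.ofReal (σ y) := by
    intro y
    simp only [hG]
    rw [← ENNReal.rpow_mul, one_div, inv_mul_cancel₀ (ne_of_gt hp'pos), ENNReal.rpow_one]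
  rw [h1p']
  calc (∫⁻ y in s, ENNReal.ofReal |f y * σ y|) = ∫⁻ y in s, (F * G) y := by
        exact lintegral_congr fun y => (e1 y).symm
    _ ≤ (∫⁻ y in s, F y ^ p) ^ (1/p) * (∫⁻ y in s, G y ^ p') ^ (1/p') := key
    _ = (∫⁻ y in s, ENNReal.ofReal |f y| ^ p * ENNReal.ofReal (σ y)) ^ (1/p) *
        (∫⁻ y in s, ENNReal.ofReal (σ y)) ^ (1/p') := by
        rw [lintegral_congr e2, lintegral_congr e3]
lemma corner_mem_cube {n : ℕ} {a : Fin n → ℝ} {h : ℝ} (hh : 0 < h) :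
    (WithLp.toLp 2 a : Eucl n) ∈ cube n a h := fun i => ⟨le_refl _, by linarith⟩

lemma cube_nonempty {n : ℕ} {a : Fin n → ℝ} {h : ℝ} (hh : 0 < h) :
    (cube n a h).Nonempty := ⟨WithLp.toLp 2 a, corner_mem_cube hh⟩

lemma cube_subset_dilate {n : ℕ} {a b : Fin n → ℝ} {h k : ℝ} (hk : 0 < k) (hhk : h ≤ 2*k)
    (hz : (cube n a h ∩ cube n b k).Nonempty) :
    cube n a h ⊆ cube n (fun i => b i - 2*k) (5*k) := by
  obtain ⟨z, hza, hzb⟩ := hz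
  intro x hx i
  have h1 := hza i; have h2 := hzb i; have h3 := hx i
  constructor <;> [skip; skip] <;> dsimp only <;> nlinarith [h1.1, h1.2, h2.1, h2.2, h3.1, h3.2]

lemma cube_subset_self_dilate {n : ℕ} {b : Fin n → ℝ} {k : ℝ} (hk : 0 ≤ k) :
    cube n b k ⊆ cube n (fun i => b i - 2*k) (5*k) := by
  intro x hx i
  have h3 := hx i
  constructor <;> dsimp only <;> nlinarith [h3.1, h3.2]

lemma countable_disjoint_cubes {n : ℕ} {𝒰 : Set ((Fin n → ℝ) × ℝ)}
    (hpos : ∀ j ∈ 𝒰, 0 < j.2)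
    (hd : 𝒰.PairwiseDisjoint (fun j => cube n j.1 j.2)) : 𝒰.Countable := by
  have hrat : ∀ j ∈ 𝒰, ∃ v : Fin n → ℚ, (WithLp.toLp 2 (fun i => (v i : ℝ)) : Eucl n) ∈ cube n j.1 j.2 := by
    intro j hj
    have : ∀ i : Fin n, ∃ q : ℚ, j.1 i < (q:ℝ) ∧ (q:ℝ) < j.1 i + j.2 := by
      intro i
      exact exists_rat_btwn (by linarith [hpos j hj])
    choose v hv using this
    exact ⟨v, fun i => ⟨le_of_lt (hv i).1, (hv i).2⟩⟩
  choose! v hv using hrat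
  rw [← Set.countable_coe_iff]
  have hinj : Function.Injective (fun j : ↥𝒰 => v j) := by
    intro j₁ j₂ hveq
    by_contra hne
    have hne' : (j₁ : (Fin n → ℝ) × ℝ) ≠ (j₂ : (Fin n → ℝ) × ℝ) := fun hc => hne (Subtype.ext hc)
    have hdisj := hd j₁.2 j₂.2 hne'
    have hm1 := hv j₁ j₁.2
    have hm2 := hv j₂ j₂.2
    simp only at hveq
    rw [hveq] at hm1
    exact (Set.disjoint_left.mp hdisj hm1) hm2
  exact hinj.countable

lemma one_div_p_lt_one {p : ℝ} (hp : 1 < p) : (0:ℝ) ≤ 1 - 1/p := by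
  have : 1/p < 1 := by rw [div_lt_one (lt_trans one_pos hp)]; exact hp
  linarith

lemma per_cube_estimate {n : ℕ} (hn : 0 < n) {α p q : ℝ} (hα0 : 0 ≤ α) (hαn : α ≤ n)
    (hp : 1 < p) (hq : 0 < q)
    {u σ f : Eucl n → ℝ} (hσm : Measurable σ) (hσ0 : ∀ x, 0 ≤ σ x) (hf : Measurable f)
    {t : ℝ} {b : Fin n → ℝ} {k : ℝ} (hk : 0 < k)
    (hT : ENNReal.ofReal t < volume (cube n b k) ^ (α/(n:ℝ)) *
      lavg (cube n b k) (fun y => ENNReal.ofReal |f y * σ y|)) :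
    ENNReal.ofReal t * setW u (cube n (fun i => b i - 2*k) (5*k)) ^ (1/q) ≤
      (5:ℝ≥0∞) ^ ((n:ℝ) - α) * apqAlpha n α p q u σ *
        (∫⁻ y in cube n b k, ENNReal.ofReal |f y| ^ p * ENNReal.ofReal (σ y)) ^ (1/p) := by
  set B := cube n b k with hB
  set Q := cube n (fun i => b i - 2*k) (5*k) with hQ
  set vB := volume B with hvB
  set vQ := volume Q with hvQ
  set IB := ∫⁻ y in B, ENNReal.ofReal |f y * σ y| with hIB
  set G := ∫⁻ y in B, ENNReal.ofReal |f y| ^ p * ENNReal.ofReal (σ y) with hG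
  set e := 1 - 1/p with he
  have hvB0 : vB ≠ 0 := volume_cube_ne_zero b hk
  have hvBt : vB ≠ ⊤ := volume_cube_ne_top b k
  have he0 : (0:ℝ) ≤ e := one_div_p_lt_one hp
  have hαn' : (0:ℝ) ≤ 1 - α/(n:ℝ) := by
    have hn' : (0:ℝ) < n := by exact_mod_cast hn
    have : α/(n:ℝ) ≤ 1 := by rw [div_le_one hn']; exact hαn
    linarith
  have hA := apq_term_bound (α := α) (q := q) hp hq u σ (fun i => b i - 2*k)
    (by linarith : (0:ℝ) < 5*k)
  have hss : setW σ B ≤ setW σ Q := by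
    exact lintegral_mono' (Measure.restrict_mono (cube_subset_self_dilate (le_of_lt hk)) le_rfl)
      le_rfl
  have hholder : IB ≤ G ^ (1/p) * setW σ B ^ e := holder_set hf hσm hσ0 hp B
  have hvol5 : vQ ^ (1 - α/(n:ℝ)) = (5:ℝ≥0∞) ^ ((n:ℝ) - α) * vB ^ (1 - α/(n:ℝ)) := by
    have h5 : vQ = (5:ℝ≥0∞) ^ (n:ℕ) * vB := by
      have h51 : ENNReal.ofReal (5*k) = 5 * ENNReal.ofReal k := by
        rw [ENNReal.ofReal_mul (by norm_num : (0:ℝ) ≤ 5)]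
        norm_num
      rw [hvQ, hvB, volume_cube, volume_cube, h51, mul_pow]
    rw [h5, ENNReal.mul_rpow_of_nonneg _ _ hαn', ← ENNReal.rpow_natCast (5:ℝ≥0∞) n,
      ← ENNReal.rpow_mul]
    congr 2
    have hn' : (n:ℝ) ≠ 0 := by positivity
    field_simp
  calc ENNReal.ofReal t * setW u Q ^ (1/q)
      ≤ vB ^ (α/(n:ℝ)) * (IB / vB) * setW u Q ^ (1/q) := by
        exact mul_le_mul_left (le_of_lt hT) _
    _ ≤ vB ^ (α/(n:ℝ)) * ((G ^ (1/p) * setW σ B ^ e) / vB) * setW u Q ^ (1/q) := by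
        exact mul_le_mul_left (mul_le_mul_right (ENNReal.div_le_div_right hholder _) _) _
    _ = (vB ^ (α/(n:ℝ)) * vB ^ (-1:ℝ) * G ^ (1/p)) * (setW σ B ^ e * setW u Q ^ (1/q)) := by
        rw [div_eq_mul_inv (G ^ (1/p) * setW σ B ^ e) vB, ← ENNReal.rpow_neg_one vB]
        ring
    _ ≤ (vB ^ (α/(n:ℝ)) * vB ^ (-1:ℝ) * G ^ (1/p)) * (setW σ Q ^ e * setW u Q ^ (1/q)) := by
        exact mul_le_mul_right (mul_le_mul_left (ENNReal.rpow_le_rpow hss he0) _) _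
    _ = (vB ^ (α/(n:ℝ)) * vB ^ (-1:ℝ) * G ^ (1/p)) * (setW u Q ^ (1/q) * setW σ Q ^ e) := by
        ring
    _ ≤ (vB ^ (α/(n:ℝ)) * vB ^ (-1:ℝ) * G ^ (1/p)) * (apqAlpha n α p q u σ * vQ ^ (1 - α/(n:ℝ))) := by
        exact mul_le_mul_right hA _
    _ = (5:ℝ≥0∞) ^ ((n:ℝ) - α) * apqAlpha n α p q u σ * G ^ (1/p) *
        (vB ^ (α/(n:ℝ)) * vB ^ (-1:ℝ) * vB ^ (1 - α/(n:ℝ))) := by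
        rw [hvol5]; ring
    _ = (5:ℝ≥0∞) ^ ((n:ℝ) - α) * apqAlpha n α p q u σ * G ^ (1/p) := by
        rw [← ENNReal.rpow_add _ _ hvB0 hvBt, ← ENNReal.rpow_add _ _ hvB0 hvBt]
        have : α/(n:ℝ) + (-1:ℝ) + (1 - α/(n:ℝ)) = 0 := by ring
        rw [this, ENNReal.rpow_zero, mul_one]

lemma ennreal_rpow_iSup {g : ℕ → ℝ≥0∞} (hmono : Monotone g) {r : ℝ} (hr : 0 < r) :
    (⨆ N, g N) ^ r = ⨆ N, (g N) ^ r := by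
  refine Monotone.map_iSup_of_continuousAt ?_ (fun _ _ h => ENNReal.rpow_le_rpow h (le_of_lt hr)) ?_
  · exact (ENNReal.continuous_rpow_const).continuousAt
  · simp [ENNReal.zero_rpow_of_pos hr]

lemma term_eq {n : ℕ} {α p q : ℝ} (hp : 1 < p) (hq : 0 < q) (u σ : Eucl n → ℝ) (a : Fin n → ℝ) {h : ℝ} (hh : 0 < h) :
    volume (cube n a h) ^ (α / (n:ℝ) + 1/q - 1/p) *
      ((lavg (cube n a h) (fun x => ENNReal.ofReal (u x))) ^ (1/q) *
       (lavg (cube n a h) (fun x => ENNReal.ofReal (σ x))) ^ (1 - 1/p)) =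
    volume (cube n a h) ^ (α / (n:ℝ) - 1) *
      (setW u (cube n a h) ^ (1/q) * setW σ (cube n a h) ^ (1 - 1/p)) := by
  set v := volume (cube n a h) with hv
  have hv0 : v ≠ 0 := volume_cube_ne_zero a hh
  have hvt : v ≠ ⊤ := volume_cube_ne_top a h
  have hvadd : ∀ x y : ℝ, v ^ x * v ^ y = v ^ (x + y) :=
    fun x y => (ENNReal.rpow_add x y hv0 hvt).symm
  set U := setW u (cube n a h) with hU
  set S := setW σ (cube n a h) with hS
  have hlavgU : lavg (cube n a h) (fun x => ENNReal.ofReal (u x)) = U / v := rfl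
  have hlavgS : lavg (cube n a h) (fun x => ENNReal.ofReal (σ x)) = S / v := rfl
  rw [hlavgU, hlavgS,
    ENNReal.div_rpow_of_nonneg _ _ (by positivity : (0:ℝ) ≤ 1/q),
    ENNReal.div_rpow_of_nonneg _ _ (one_div_p_lt_one hp)]
  rw [div_eq_mul_inv (U ^ (1/q)) (v ^ (1/q)), div_eq_mul_inv (S ^ (1 - 1/p)) (v ^ (1 - 1/p)),
    ← ENNReal.rpow_neg v (1/q), ← ENNReal.rpow_neg v (1 - 1/p)]
  calc v ^ (α / (n:ℝ) + 1/q - 1/p) * (U ^ (1/q) * v ^ (-(1/q)) * (S ^ (1 - 1/p) * v ^ (-(1 - 1/p))))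
      = (U ^ (1/q) * S ^ (1 - 1/p)) *
        (v ^ (α / (n:ℝ) + 1/q - 1/p) * v ^ (-(1/q)) * v ^ (-(1 - 1/p))) := by ring
    _ = (U ^ (1/q) * S ^ (1 - 1/p)) * v ^ (α / (n:ℝ) - 1) := by
        rw [hvadd, hvadd]
        congr 1
        ring
    _ = v ^ (α / (n:ℝ) - 1) * (U ^ (1/q) * S ^ (1 - 1/p)) := by ring

lemma reverse_bound {n : ℕ} (hn : 0 < n) {α p q : ℝ} (hα0 : 0 < α) (hαn : α < (n:ℝ))
    (hp : 1 < p) (hpq : p ≤ q)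
    {u σ : Eucl n → ℝ} (hσm : Measurable σ) (hσ0 : ∀ x, 0 ≤ σ x) (C' : ℝ≥0)
    (H : ∀ f : Eucl n → ℝ, Measurable f → ∀ t : ℝ, 0 < t →
      ENNReal.ofReal t *
          (setW u {x | ENNReal.ofReal t < maxFn n α (fun y => f y * σ y) x}) ^ (1/q) ≤
        (C' : ℝ≥0∞) * (∫⁻ x, ENNReal.ofReal |f x| ^ p * ENNReal.ofReal (σ x)) ^ (1/p)) :
    apqAlpha n α p q u σ ≤ (C' : ℝ≥0∞) := by
  classical
  have hp0 : (0:ℝ) < p := lt_trans one_pos hp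
  have hq0 : (0:ℝ) < q := lt_of_lt_of_le hp0 hpq
  have he0 : (0:ℝ) ≤ 1 - 1/p := one_div_p_lt_one hp
  have he0' : (0:ℝ) < 1 - 1/p := by
    have : 1/p < 1 := by rw [div_lt_one hp0]; exact hp
    linarith
  have hαn0 : (0:ℝ) ≤ α/(n:ℝ) := by positivity
  rw [apqAlpha]
  refine iSup_le fun a => iSup_le fun h => iSup_le fun hh => ?_
  rw [term_eq hp hq0 u σ a hh]
  set Q := cube n a h with hQ
  set v := volume Q with hv
  have hv0 : v ≠ 0 := volume_cube_ne_zero a hh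
  have hvt : v ≠ ⊤ := volume_cube_ne_top a h
  set SN : ℕ → ℝ≥0∞ := fun N => ∫⁻ x in Q, ENNReal.ofReal (min (σ x) (N:ℝ)) with hSN
  have hSNt : ∀ N, SN N ≠ ⊤ := by
    intro N
    have hb : SN N ≤ ENNReal.ofReal (N:ℝ) * v := by
      rw [hSN]
      calc (∫⁻ x in Q, ENNReal.ofReal (min (σ x) (N:ℝ)))
          ≤ ∫⁻ _ in Q, ENNReal.ofReal (N:ℝ) :=
            lintegral_mono fun x => ENNReal.ofReal_le_ofReal (min_le_right _ _)
        _ = ENNReal.ofReal (N:ℝ) * v := by rw [setLIntegral_const]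
    exact ne_top_of_le_ne_top (ENNReal.mul_ne_top ENNReal.ofReal_ne_top hvt) hb
  have hDN : ∀ N : ℕ, v ^ (α/(n:ℝ) - 1) * (SN N) ^ (1 - 1/p) * setW u Q ^ (1/q) ≤
      (C' : ℝ≥0∞) := by
    intro N
    rcases eq_or_ne (SN N) 0 with hS0 | hS0
    · rw [hS0, ENNReal.zero_rpow_of_pos he0', mul_zero, zero_mul]
      exact zero_le
    set g : Eucl n → ℝ := fun x => if x ∈ Q ∧ 0 < σ x then min (σ x) (N:ℝ) / σ x else 0 with hg
    have hgm : Measurable g := by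
      refine Measurable.ite ?_ ((hσm.min measurable_const).div hσm) measurable_const
      exact (measurableSet_cube (n := n) (a := a) (h := h)).inter
        (measurableSet_lt measurable_const hσm)
    have hgnonneg : ∀ x, 0 ≤ g x := by
      intro x
      rw [hg]
      dsimp only
      split_ifs with hx
      · exact div_nonneg (le_min (hσ0 x) (Nat.cast_nonneg N)) (hσ0 x)
      · exact le_refl 0
    have hgσ : ∀ x ∈ Q, ENNReal.ofReal |g x * σ x| = ENNReal.ofReal (min (σ x) (N:ℝ)) := by
      intro x hx
      rcases lt_or_eq_of_le (hσ0 x) with hσx | hσx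
      · have : g x = min (σ x) (N:ℝ) / σ x := by rw [hg]; exact if_pos ⟨hx, hσx⟩
        rw [this, div_mul_cancel₀ _ (ne_of_gt hσx),
          abs_of_nonneg (le_min (hσ0 x) (Nat.cast_nonneg N))]
      · have : g x = 0 := by
          rw [hg]
          refine if_neg fun hc => ?_
          rw [← hσx] at hc
          exact lt_irrefl 0 hc.2
        rw [this, zero_mul, abs_zero, ← hσx, min_eq_left (Nat.cast_nonneg N)]
    have hlavg : (∫⁻ y in Q, ENNReal.ofReal |g y * σ y|) = SN N := by
      rw [hSN]
      exact setLIntegral_congr_fun measurableSet_cube (fun x hx => hgσ x hx)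
    set m := v ^ (α/(n:ℝ)) * (SN N / v) with hm
    have hmt : m ≠ ⊤ := by
      refine ENNReal.mul_ne_top ?_ ?_
      · exact ENNReal.rpow_ne_top_of_nonneg hαn0 hvt
      · exact (ENNReal.div_lt_top (hSNt N) hv0).ne
    have hFg : (∫⁻ x, ENNReal.ofReal |g x| ^ p * ENNReal.ofReal (σ x)) ≤ SN N := by
      calc (∫⁻ x, ENNReal.ofReal |g x| ^ p * ENNReal.ofReal (σ x))
          ≤ ∫⁻ x, Q.indicator (fun y => ENNReal.ofReal (min (σ y) (N:ℝ))) x := by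
            refine lintegral_mono fun x => ?_
            by_cases hx : x ∈ Q ∧ 0 < σ x
            · have hg1 : ENNReal.ofReal |g x| ≤ 1 := by
                rw [ENNReal.ofReal_le_one, abs_of_nonneg (hgnonneg x)]
                have : g x = min (σ x) (N:ℝ) / σ x := by rw [hg]; exact if_pos hx
                rw [this, div_le_one hx.2]
                exact min_le_left _ _
              calc ENNReal.ofReal |g x| ^ p * ENNReal.ofReal (σ x)
                  ≤ ENNReal.ofReal |g x| ^ (1:ℝ) * ENNReal.ofReal (σ x) :=
                    mul_le_mul_left
                      (ENNReal.rpow_le_rpow_of_exponent_ge hg1 (le_of_lt hp)) _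
                _ = ENNReal.ofReal |g x * σ x| := by
                    rw [ENNReal.rpow_one, ← ENNReal.ofReal_mul (abs_nonneg _), abs_mul,
                      abs_of_nonneg (hσ0 x)]
                _ = Q.indicator (fun y => ENNReal.ofReal (min (σ y) (N:ℝ))) x := by
                    rw [hgσ x hx.1, Set.indicator_of_mem hx.1]
            · have hgx : g x = 0 := by rw [hg]; exact if_neg hx
              rw [hgx, abs_zero, ENNReal.ofReal_zero,
                ENNReal.zero_rpow_of_pos hp0, zero_mul]
              exact zero_le
        _ = SN N := by rw [lintegral_indicator measurableSet_cube]
    have hmain : m * setW u Q ^ (1/q) ≤ (C' : ℝ≥0∞) * (SN N) ^ (1/p) := by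
      refine ennreal_mul_le_of_forall_lt hmt fun t ht hlt => ?_
      have hQsub : Q ⊆ {x | ENNReal.ofReal t < maxFn n α (fun y => g y * σ y) x} := by
        intro x hx
        refine lt_of_lt_of_le hlt ?_
        rw [maxFn]
        refine le_iSup_of_le a (le_iSup_of_le h (le_iSup_of_le hh (le_iSup_of_le hx ?_)))
        rw [hm]
        refine le_of_eq ?_
        congr 1
        rw [lavg, hlavg]
      have h1 := H g hgm t ht
      calc ENNReal.ofReal t * setW u Q ^ (1/q)
          ≤ ENNReal.ofReal t *
              (setW u {x | ENNReal.ofReal t < maxFn n α (fun y => g y * σ y) x}) ^ (1/q) :=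
            mul_le_mul_right
              (ENNReal.rpow_le_rpow (lintegral_mono_set hQsub) (by positivity)) _
        _ ≤ (C' : ℝ≥0∞) * (∫⁻ x, ENNReal.ofReal |g x| ^ p * ENNReal.ofReal (σ x)) ^ (1/p) := h1
        _ ≤ (C' : ℝ≥0∞) * (SN N) ^ (1/p) :=
            mul_le_mul_right (ENNReal.rpow_le_rpow hFg (by positivity)) _
    have hmm : m = v ^ (α/(n:ℝ) - 1) * SN N := by
      rw [hm, div_eq_mul_inv (SN N) v, ← ENNReal.rpow_neg_one v]
      calc v ^ (α/(n:ℝ)) * (SN N * v ^ (-1:ℝ))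
          = v ^ (α/(n:ℝ)) * v ^ (-1:ℝ) * SN N := by ring
        _ = v ^ (α/(n:ℝ) - 1) * SN N := by
            rw [← ENNReal.rpow_add _ _ hv0 hvt,
              show α/(n:ℝ) + (-1:ℝ) = α/(n:ℝ) - 1 by ring]
    set X := SN N ^ ((1:ℝ)/p) with hX
    set Y := SN N ^ (1 - 1/p) with hY
    have hsplit : SN N = X * Y := by
      rw [hX, hY, ← ENNReal.rpow_add _ _ hS0 (hSNt N),
        show (1:ℝ)/p + (1 - 1/p) = 1 by ring, ENNReal.rpow_one]
    rw [hmm, hsplit] at hmain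
    have hc1 : X ≠ 0 :=
      ne_of_gt (ENNReal.rpow_pos (pos_iff_ne_zero.mpr hS0) (hSNt N))
    have hc2 : X ≠ ⊤ :=
      ENNReal.rpow_ne_top_of_nonneg (by positivity) (hSNt N)
    refine (ENNReal.mul_le_mul_iff_left hc1 hc2).mp ?_
    calc (v ^ (α/(n:ℝ) - 1) * Y * setW u Q ^ (1/q)) * X
        = v ^ (α/(n:ℝ) - 1) * (X * Y) * setW u Q ^ (1/q) := by ring
      _ ≤ (C' : ℝ≥0∞) * X := hmain
  have hSNmono : Monotone SN := by
    intro N M hNM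
    refine lintegral_mono fun x => ENNReal.ofReal_le_ofReal ?_
    exact min_le_min (le_refl _) (Nat.cast_le.mpr hNM)
  have hSsup : (⨆ N, SN N) = setW σ Q := by
    rw [hSN, setW, ← lintegral_iSup (fun N => (hσm.min measurable_const).ennreal_ofReal)
      (fun N M hNM x => ENNReal.ofReal_le_ofReal (min_le_min (le_refl _) (Nat.cast_le.mpr hNM)))]
    refine lintegral_congr fun x => ?_
    refine le_antisymm (iSup_le fun N => ENNReal.ofReal_le_ofReal (min_le_left _ _)) ?_
    refine le_iSup_of_le ⌈σ x⌉₊ (le_of_eq ?_)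
    rw [min_eq_left (Nat.le_ceil _)]
  have hSe : setW σ Q ^ (1 - 1/p) = ⨆ N, SN N ^ (1 - 1/p) := by
    rw [← hSsup, ennreal_rpow_iSup hSNmono he0']
  calc v ^ (α/(n:ℝ) - 1) * (setW u Q ^ (1/q) * setW σ Q ^ (1 - 1/p))
      = ⨆ N, v ^ (α/(n:ℝ) - 1) * SN N ^ (1 - 1/p) * setW u Q ^ (1/q) := by
        rw [hSe, ENNReal.mul_iSup (setW u Q ^ (1/q)), ENNReal.mul_iSup]
        exact iSup_congr fun N => by ring
    _ ≤ (C' : ℝ≥0∞) := iSup_le hDN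

lemma forward_bound {n : ℕ} (hn : 0 < n) {α p q : ℝ} (hα0 : 0 < α) (hαn : α < (n:ℝ))
    (hp : 1 < p) (hpq : p ≤ q)
    {u σ : Eucl n → ℝ} (hσm : Measurable σ) (hσ0 : ∀ x, 0 ≤ σ x)
    (f : Eucl n → ℝ) (hf : Measurable f) (t : ℝ) (ht : 0 < t) :
    ENNReal.ofReal t *
        (setW u {x | ENNReal.ofReal t < maxFn n α (fun y => f y * σ y) x}) ^ (1/q) ≤
      (5:ℝ≥0∞) ^ ((n:ℝ) - α) * apqAlpha n α p q u σ *
        (∫⁻ x, ENNReal.ofReal |f x| ^ p * ENNReal.ofReal (σ x)) ^ (1/p) := by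
  have hp0 : (0:ℝ) < p := lt_trans one_pos hp
  have hq0 : (0:ℝ) < q := lt_of_lt_of_le hp0 hpq
  have hqp1 : (1:ℝ) ≤ q / p := (one_le_div hp0).mpr hpq
  set A := apqAlpha n α p q u σ with hA
  set F := ∫⁻ x, ENNReal.ofReal |f x| ^ p * ENNReal.ofReal (σ x) with hF
  set T : (Fin n → ℝ) × ℝ → ℝ≥0∞ := fun j =>
    volume (cube n j.1 j.2) ^ (α/(n:ℝ)) *
      lavg (cube n j.1 j.2) (fun y => ENNReal.ofReal |f y * σ y|) with hT
  set EN : ℕ → Set (Eucl n) := fun N =>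
    ⋃ j ∈ {j : (Fin n → ℝ) × ℝ | 0 < j.2 ∧ j.2 ≤ (N:ℝ)+1 ∧ ENNReal.ofReal t < T j},
      cube n j.1 j.2 with hEN
  set ν := volume.withDensity (fun x => ENNReal.ofReal (u x)) with hν
  set μf := volume.withDensity (fun x => ENNReal.ofReal |f x| ^ p * ENNReal.ofReal (σ x)) with hμf
  set Rq := ((5:ℝ≥0∞) ^ ((n:ℝ) - α) * A) ^ q * F ^ (q/p) with hRq
  have claimA : ∀ N : ℕ, ∃ W : Set (Eucl n), MeasurableSet W ∧ EN N ⊆ W ∧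
      (ENNReal.ofReal t)^q * ν W ≤ Rq := by
    intro N
    set tN := {j : (Fin n → ℝ) × ℝ | 0 < j.2 ∧ j.2 ≤ (N:ℝ)+1 ∧ ENNReal.ofReal t < T j} with htN
    obtain ⟨𝒰, h𝒰sub, h𝒰disj, h𝒰cov⟩ := Vitali.exists_disjoint_subfamily_covering_enlargement
      (fun j : (Fin n → ℝ) × ℝ => cube n j.1 j.2) tN (fun j => j.2) 2 one_lt_two
      (fun j hj => le_of_lt hj.1) ((N:ℝ)+1) (fun j hj => hj.2.1)
      (fun j hj => cube_nonempty hj.1)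
    have hcnt : 𝒰.Countable := countable_disjoint_cubes (fun j hj => (h𝒰sub hj).1) h𝒰disj
    haveI := hcnt.to_subtype
    set Qs : ↥𝒰 → Set (Eucl n) := fun j =>
      cube n (fun i => (j : (Fin n → ℝ) × ℝ).1 i - 2*(j : (Fin n → ℝ) × ℝ).2)
        (5*(j : (Fin n → ℝ) × ℝ).2) with hQs
    refine ⟨⋃ j : ↥𝒰, Qs j, MeasurableSet.iUnion (fun _ => measurableSet_cube), ?_, ?_⟩
    · intro x hx
      simp only [hEN, Set.mem_iUnion] at hx
      obtain ⟨j, hj, hjmem⟩ := hx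
      obtain ⟨b, hb𝒰, hinter, hle⟩ := h𝒰cov j hj
      have hbk : 0 < b.2 := (h𝒰sub hb𝒰).1
      refine Set.mem_iUnion.mpr ⟨⟨b, hb𝒰⟩, ?_⟩
      exact cube_subset_dilate hbk hle hinter hjmem
    · have hperj : ∀ j : ↥𝒰, (ENNReal.ofReal t)^q * ν (Qs j) ≤
          ((5:ℝ≥0∞) ^ ((n:ℝ) - α) * A) ^ q * (μf (cube n (j : (Fin n → ℝ) × ℝ).1
            (j : (Fin n → ℝ) × ℝ).2)) ^ (q/p) := by
        intro j
        obtain ⟨hk, _, hTj⟩ := h𝒰sub j.2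
        have hjq := per_cube_estimate hn (le_of_lt hα0) (le_of_lt hαn) hp hq0
          hσm hσ0 hf hk hTj (u := u) (q := q)
        have hraise := ENNReal.rpow_le_rpow hjq (le_of_lt hq0)
        have hqne : q ≠ 0 := ne_of_gt hq0
        have eL : (ENNReal.ofReal t * setW u (Qs j) ^ (1/q)) ^ q =
            (ENNReal.ofReal t)^q * setW u (Qs j) := by
          rw [ENNReal.mul_rpow_of_nonneg _ _ (le_of_lt hq0), ← ENNReal.rpow_mul,
            one_div, inv_mul_cancel₀ hqne, ENNReal.rpow_one]
        have eR : ((5:ℝ≥0∞) ^ ((n:ℝ) - α) * A *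
            (∫⁻ y in cube n (j : (Fin n → ℝ) × ℝ).1 (j : (Fin n → ℝ) × ℝ).2,
              ENNReal.ofReal |f y| ^ p * ENNReal.ofReal (σ y)) ^ (1/p)) ^ q =
            ((5:ℝ≥0∞) ^ ((n:ℝ) - α) * A) ^ q *
            (∫⁻ y in cube n (j : (Fin n → ℝ) × ℝ).1 (j : (Fin n → ℝ) × ℝ).2,
              ENNReal.ofReal |f y| ^ p * ENNReal.ofReal (σ y)) ^ (q/p) := by
          rw [ENNReal.mul_rpow_of_nonneg _ _ (le_of_lt hq0), ← ENNReal.rpow_mul]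
          congr 2
          field_simp
        rw [eL, eR] at hraise
        rw [hν, withDensity_apply _ measurableSet_cube, hμf,
          withDensity_apply _ measurableSet_cube]
        exact hraise
      calc (ENNReal.ofReal t)^q * ν (⋃ j : ↥𝒰, Qs j)
          ≤ (ENNReal.ofReal t)^q * ∑' j : ↥𝒰, ν (Qs j) :=
            mul_le_mul_right (measure_iUnion_le _) _
        _ = ∑' j : ↥𝒰, (ENNReal.ofReal t)^q * ν (Qs j) := ENNReal.tsum_mul_left.symm
        _ ≤ ∑' j : ↥𝒰, ((5:ℝ≥0∞) ^ ((n:ℝ) - α) * A) ^ q *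
            (μf (cube n (j : (Fin n → ℝ) × ℝ).1 (j : (Fin n → ℝ) × ℝ).2)) ^ (q/p) :=
            ENNReal.tsum_le_tsum hperj
        _ = ((5:ℝ≥0∞) ^ ((n:ℝ) - α) * A) ^ q *
            ∑' j : ↥𝒰, (μf (cube n (j : (Fin n → ℝ) × ℝ).1 (j : (Fin n → ℝ) × ℝ).2)) ^ (q/p) :=
            ENNReal.tsum_mul_left
        _ ≤ ((5:ℝ≥0∞) ^ ((n:ℝ) - α) * A) ^ q *
            (∑' j : ↥𝒰, μf (cube n (j : (Fin n → ℝ) × ℝ).1 (j : (Fin n → ℝ) × ℝ).2)) ^ (q/p) :=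
            mul_le_mul_right (tsum_rpow_le_rpow_tsum _ hqp1) _
        _ ≤ Rq := by
            rw [hRq]
            refine mul_le_mul_right (ENNReal.rpow_le_rpow ?_ (by positivity)) _
            have hdisj : Pairwise (Function.onFun Disjoint fun j : ↥𝒰 =>
                cube n (j : (Fin n → ℝ) × ℝ).1 (j : (Fin n → ℝ) × ℝ).2) := by
              intro j₁ j₂ hne
              exact h𝒰disj j₁.2 j₂.2 (fun hc => hne (Subtype.ext hc))
            rw [← measure_iUnion hdisj (fun _ => measurableSet_cube)]
            have : μf (⋃ j : ↥𝒰, cube n (j : (Fin n → ℝ) × ℝ).1 (j : (Fin n → ℝ) × ℝ).2) ≤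
                μf Set.univ := measure_mono (Set.subset_univ _)
            rwa [hμf, withDensity_apply _ MeasurableSet.univ, Measure.restrict_univ] at this
  choose W hWm hWsub hWle using claimA
  set V : ℕ → Set (Eucl n) := fun N => ⋂ M, W (N ⊔ M) with hV
  have hVm : ∀ N, MeasurableSet (V N) := fun N => MeasurableSet.iInter (fun M => hWm _)
  have hVmono : Monotone V := by
    intro N N' hNN' x hx
    refine Set.mem_iInter.mpr fun M => ?_
    have h1 : N ⊔ (N' ⊔ M) = N' ⊔ M := sup_eq_right.mpr (le_trans hNN' le_sup_left)
    have := Set.mem_iInter.mp hx (N' ⊔ M)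
    rwa [h1] at this
  have hENmono : Monotone EN := by
    intro N N' hNN' x hx
    simp only [hEN, Set.mem_iUnion] at hx ⊢
    obtain ⟨j, ⟨hj1, hj2, hj3⟩, hjmem⟩ := hx
    exact ⟨j, ⟨hj1, le_trans hj2 (by exact_mod_cast add_le_add_left (Nat.cast_le.mpr hNN') 1), hj3⟩, hjmem⟩
  have hEV : ∀ N, EN N ⊆ V N := by
    intro N
    refine Set.subset_iInter fun M => ?_
    exact le_trans (hENmono le_sup_left) (hWsub (N ⊔ M))
  have hEsub : {x | ENNReal.ofReal t < maxFn n α (fun y => f y * σ y) x} ⊆ ⋃ N, V N := by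
    intro x hx
    simp only [Set.mem_setOf_eq, maxFn, lt_iSup_iff] at hx
    obtain ⟨a, h, hh, hxm, hlt⟩ := hx
    have hN : h ≤ (⌈h⌉₊ : ℝ) + 1 := by
      have := Nat.le_ceil h
      linarith
    refine Set.mem_iUnion.mpr ⟨⌈h⌉₊, hEV _ ?_⟩
    simp only [hEN, Set.mem_iUnion]
    exact ⟨(a, h), ⟨hh, hN, hlt⟩, hxm⟩
  have hVsub : ∀ N, V N ⊆ W N := by
    intro N x hx
    have := Set.mem_iInter.mp hx N
    rwa [sup_idem] at this
  have htot : (ENNReal.ofReal t)^q * ν (⋃ N, V N) ≤ Rq := by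
    rw [hVmono.measure_iUnion, ENNReal.mul_iSup]
    exact iSup_le fun N => le_trans
      (mul_le_mul_right (measure_mono (hVsub N)) _) (hWle N)
  have hsetW : setW u {x | ENNReal.ofReal t < maxFn n α (fun y => f y * σ y) x} ≤
      ν (⋃ N, V N) := by
    rw [hν, withDensity_apply _ (MeasurableSet.iUnion hVm)]
    exact lintegral_mono_set hEsub
  have hqne : q ≠ 0 := ne_of_gt hq0
  calc ENNReal.ofReal t *
        (setW u {x | ENNReal.ofReal t < maxFn n α (fun y => f y * σ y) x}) ^ (1/q)
      ≤ ENNReal.ofReal t * (ν (⋃ N, V N)) ^ (1/q) :=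
        mul_le_mul_right (ENNReal.rpow_le_rpow hsetW (by positivity)) _
    _ = ((ENNReal.ofReal t)^q * ν (⋃ N, V N)) ^ (1/q) := by
        rw [ENNReal.mul_rpow_of_nonneg _ _ (by positivity : (0:ℝ) ≤ 1/q), ← ENNReal.rpow_mul,
          mul_one_div, div_self hqne, ENNReal.rpow_one]
    _ ≤ Rq ^ (1/q) := ENNReal.rpow_le_rpow htot (by positivity)
    _ = (5:ℝ≥0∞) ^ ((n:ℝ) - α) * A * F ^ (1/p) := by
        rw [hRq, ENNReal.mul_rpow_of_nonneg _ _ (by positivity : (0:ℝ) ≤ 1/q),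
          ← ENNReal.rpow_mul, ← ENNReal.rpow_mul]
        rw [mul_one_div, div_self hqne, ENNReal.rpow_one]
        congr 1
        congr 1
        field_simp


end Auxiliary

/-- two-weight `A_{p,q}^α` characterizes the weak type for `M_α`. -/
theorem statement13 (n : ℕ) (hn : 0 < n) (α p q : ℝ) (hα0 : 0 < α) (hαn : α < n)
    (hp : 1 < p) (hpq : p ≤ q) :
    ∃ C : ℝ≥0, 0 < C ∧ ∀ u σ : Eucl n → ℝ, Weight u → Weight σ →
      ((apqAlpha n α p q u σ ≠ ⊤) ↔
        (∃ C' : ℝ≥0, ∀ f : Eucl n → ℝ, Measurable f → ∀ t : ℝ, 0 < t →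
          ENNReal.ofReal t *
            (setW u {x | ENNReal.ofReal t < maxFn n α (fun y => f y * σ y) x}) ^ (1/q) ≤
          (C' : ℝ≥0∞) *
            (∫⁻ x, ENNReal.ofReal |f x| ^ p * ENNReal.ofReal (σ x)) ^ (1/p))) ∧
      (apqAlpha n α p q u σ ≠ ⊤ →
        ∀ f : Eucl n → ℝ, Measurable f → ∀ t : ℝ, 0 < t →
          ENNReal.ofReal t *
            (setW u {x | ENNReal.ofReal t < maxFn n α (fun y => f y * σ y) x}) ^ (1/q) ≤
          (C : ℝ≥0∞) * apqAlpha n α p q u σ *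
            (∫⁻ x, ENNReal.ofReal |f x| ^ p * ENNReal.ofReal (σ x)) ^ (1/p)) := by
  have hp0 : (0:ℝ) < p := lt_trans one_pos hp
  have hq0 : (0:ℝ) < q := lt_of_lt_of_le hp0 hpq
  refine ⟨(5:ℝ≥0)^n, pow_pos (by norm_num) n, fun u σ hu hσ => ?_⟩
  obtain ⟨hum, hu0, hupos⟩ := hu
  obtain ⟨hσm, hσ0, hσpos⟩ := hσ
  have h5 : (5:ℝ≥0∞) ^ ((n:ℝ) - α) ≤ (((5:ℝ≥0)^n : ℝ≥0) : ℝ≥0∞) := by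
    have : (((5:ℝ≥0)^n : ℝ≥0) : ℝ≥0∞) = (5:ℝ≥0∞) ^ ((n:ℕ):ℝ) := by
      rw [ENNReal.coe_pow, ENNReal.rpow_natCast]
      norm_num
    rw [this]
    exact ENNReal.rpow_le_rpow_of_exponent_le (by norm_num) (by linarith)
  have quant : apqAlpha n α p q u σ ≠ ⊤ →
      ∀ f : Eucl n → ℝ, Measurable f → ∀ t : ℝ, 0 < t →
        ENNReal.ofReal t *
            (setW u {x | ENNReal.ofReal t < maxFn n α (fun y => f y * σ y) x}) ^ (1/q) ≤
          (((5:ℝ≥0)^n : ℝ≥0) : ℝ≥0∞) * apqAlpha n α p q u σ *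
            (∫⁻ x, ENNReal.ofReal |f x| ^ p * ENNReal.ofReal (σ x)) ^ (1/p) := by
    intro _ f hf t ht
    refine le_trans (forward_bound hn hα0 hαn hp hpq hσm hσ0 f hf t ht) ?_
    exact mul_le_mul_left (mul_le_mul_left h5 _) _
  refine ⟨?_, quant⟩
  constructor
  · intro hA
    refine ⟨(5:ℝ≥0)^n * (apqAlpha n α p q u σ).toNNReal, fun f hf t ht => ?_⟩
    have hle := quant hA f hf t ht
    rwa [← ENNReal.coe_toNNReal hA, ← ENNReal.coe_mul] at hle
  · rintro ⟨C', hC'⟩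
    have hrev := reverse_bound hn hα0 hαn hp hpq hσm hσ0 C' hC'
    exact ne_top_of_le_ne_top ENNReal.coe_ne_top hrev
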